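/- arXiv:2505.00860 — 3 statements merged into one kernel-verified Lean document; each statement's English description precedes it below -/
import Mathlib

section
/- Let H be a real separable Hilbert space He and let T : H → H be a compact, self-adjoint, positive (⟨f, T f⟩ ≥ 0 for all f), injective bounded linear operator. Then for every b ∈ H, b belongs to the closed linear span of {T^j b : j ≥ 1}; equivalently, for every ε > 0 there exist p ∈ ℕ and real coefficients γ₁, …, γ_p such that ‖b − Σ_{j=1}^p γ_j T^j b‖ < ε. -/
open scoped InnerProductSpace

/-- For a positive self-adjoint operator, `⟪v, T v⟫ = 0` forces `T v = 0`. -/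
lemma aux_Tv_eq_zero {H : Type*} [NormedAddCommGroup H] [InnerProductSpace ℝ H]
    (T : H →L[ℝ] H)
    (hsa : ∀ f g : H, ⟪T f, g⟫_ℝ = ⟪f, T g⟫_ℝ)
    (hpos : ∀ f : H, 0 ≤ ⟪f, T f⟫_ℝ)
    (v : H) (h0 : ⟪v, T v⟫_ℝ = 0) : T v = 0 := by
  set a : ℝ := ‖T v‖ ^ 2 with ha
  set c : ℝ := ⟪T v, T (T v)⟫_ℝ with hc
  have hc0 : 0 ≤ c := hpos (T v)
  have key : ∀ t : ℝ, 0 ≤ 2 * t * a + t ^ 2 * c := by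
    intro t
    have h := hpos (v + t • T v)
    have hexp : ⟪v + t • T v, T (v + t • T v)⟫_ℝ
        = ⟪v, T v⟫_ℝ + t * ⟪v, T (T v)⟫_ℝ + t * ⟪T v, T v⟫_ℝ + t ^ 2 * c := by
      simp only [map_add, map_smul, inner_add_add_self, inner_add_left, inner_add_right,
        inner_smul_left, inner_smul_right, hc, conj_trivial]
      ring
    have hswap : ⟪v, T (T v)⟫_ℝ = ⟪T v, T v⟫_ℝ := (hsa v (T v)).symm
    have hnorm : ⟪T v, T v⟫_ℝ = a := by rw [ha, real_inner_self_eq_norm_sq]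
    rw [hexp, h0, hswap, hnorm] at h
    linarith
  have ha0 : a = 0 := by
    by_contra hne
    have hapos : 0 < a := lt_of_le_of_ne (by positivity) (Ne.symm hne)
    have h := key (-a / (c + 1))
    have hc1 : (0:ℝ) < c + 1 := by linarith
    have hne1 : ((c+1):ℝ)^2 ≠ 0 := by positivity
    have heq : 2 * (-a / (c + 1)) * a + (-a / (c + 1)) ^ 2 * c
        = (-(2*a^2*(c+1)) + a^2*c) / (c+1)^2 := by field_simp
    have h3 := mul_nonneg h (le_of_lt (pow_pos hc1 2))
    rw [heq, div_mul_cancel₀ _ hne1] at h3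
    nlinarith [mul_pos hapos hapos, mul_nonneg (le_of_lt (mul_pos hapos hapos)) hc0]
  have : ‖T v‖ = 0 := by
    have := ha.symm
    nlinarith [norm_nonneg (T v)]
  exact norm_eq_zero.mp this

/-- Lemma 2: for a compact, self-adjoint, positive, injective operator `T` on a real
separable Hilbert space, every `b` lies in the closed linear span of `{T^j b : j ≥ 1}`;
equivalently, `b` can be approximated arbitrarily well by linear combinations
`Σ_{j=1}^p γ_j T^j b`. -/
theorem stmt_0 {H : Type*} [NormedAddCommGroup H] [InnerProductSpace ℝ H]
    [CompleteSpace H] [TopologicalSpace.SeparableSpace H]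
    (T : H →L[ℝ] H)
    (hcompact : IsCompactOperator (⇑T))
    (hsa : ∀ f g : H, ⟪T f, g⟫_ℝ = ⟪f, T g⟫_ℝ)
    (hpos : ∀ f : H, 0 ≤ ⟪f, T f⟫_ℝ)
    (hinj : Function.Injective (⇑T)) :
    ∀ b : H,
      b ∈ closure (Submodule.span ℝ (Set.range fun j : ℕ => (T ^ (j + 1)) b) : Set H) ∧
      ∀ ε > (0 : ℝ), ∃ (p : ℕ) (γ : Fin p → ℝ),
        ‖b - ∑ j : Fin p, γ j • (T ^ (j.val + 1)) b‖ < ε := by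
  intro b
  set v' : ℕ → H := fun j : ℕ => (T ^ (j + 1)) b with hv'
  set S : Submodule ℝ H := Submodule.span ℝ (Set.range v') with hS
  set K : Submodule ℝ H := S.topologicalClosure with hK
  have hKc : (K : Set H) = closure (S : Set H) := rfl
  -- T maps S into S
  have hTS : ∀ x ∈ S, T x ∈ S := by
    intro x hx
    induction hx using Submodule.span_induction with
    | mem x hx =>
      obtain ⟨j, rfl⟩ := hx
      apply Submodule.subset_span
      exact ⟨j + 1, by simp [hv', pow_succ', ContinuousLinearMap.mul_apply]; rw [← Function.iterate_succ_apply, Function.iterate_succ_apply']⟩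
    | zero => simp
    | add x y _ _ hx hy => rw [map_add]; exact Submodule.add_mem _ hx hy
    | smul a x _ hx => rw [map_smul]; exact Submodule.smul_mem _ a hx
  -- T maps K into K
  have hTK : ∀ x ∈ K, T x ∈ K := by
    intro x hx
    have h1 : T x ∈ ⇑T '' closure (S : Set H) := Set.mem_image_of_mem (⇑T) hx
    have h2 : T x ∈ closure (⇑T '' (S : Set H)) :=
      image_closure_subset_closure_image T.continuous h1
    refine closure_mono ?_ h2
    rintro y ⟨z, hz, rfl⟩
    exact hTS z hz
  -- b ∈ K
  have hbK : b ∈ K := by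
    obtain ⟨m, hm, w, hw, hbw⟩ := K.exists_add_mem_mem_orthogonal b
    have hTbK : T b ∈ K := by
      apply Submodule.le_topologicalClosure
      apply Submodule.subset_span
      exact ⟨0, by simp [hv']⟩
    have hTwK : T w ∈ K := by
      have : T w = T b - T m := by rw [hbw]; simp
      rw [this]
      exact Submodule.sub_mem _ hTbK (hTK m hm)
    have h0 : ⟪w, T w⟫_ℝ = 0 := by
      rw [real_inner_comm]
      exact (Submodule.mem_orthogonal K w).mp hw (T w) hTwK
    have hTw0 : T w = 0 := aux_Tv_eq_zero T hsa hpos w h0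
    have hw0 : w = 0 := hinj (by simp [hTw0])
    rw [hbw, hw0, add_zero]
    exact hm
  have hbcl : b ∈ closure (S : Set H) := hbK
  refine ⟨hbcl, ?_⟩
  intro ε hε
  rw [Metric.mem_closure_iff] at hbcl
  obtain ⟨y, hyS, hdist⟩ := hbcl ε hε
  have hyS' : y ∈ Submodule.span ℝ (Set.range v') := hyS
  rw [Finsupp.mem_span_range_iff_exists_finsupp] at hyS'
  obtain ⟨c, hc⟩ := hyS'
  obtain ⟨p, hp⟩ := c.support.exists_nat_subset_range
  refine ⟨p, fun j => c j.val, ?_⟩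
  have : ∑ j : Fin p, c j.val • v' j.val = y := by
    rw [← hc, Fin.sum_univ_eq_sum_range (fun i => c i • v' i) p]
    rw [Finsupp.sum_of_support_subset c hp (fun i a => a • v' i) (by intro i _; simp)]
  rw [show (∑ j : Fin p, c j.val • (T ^ (j.val + 1)) b) = y from this]
  rwa [← dist_eq_norm]
end

section
/- Let H be a real inner product space, C : H → H a linear map, and b ∈ H. Suppose vectors ρ₁, …, ρ_p ∈ H satisfy: ρ₁ = c^{(0)} C b for some real constant c^{(0)}, and for each j = 1, …, p−1, ρ_{j+1} = c₀^{(j)} [ C( b − Σ_{l=1}^{j} ⟨b, ρ_l⟩ ρ_l ) + Σ_{l=1}^{j} c_l^{(j)} ρ_l ] for some real constants c₀^{(j)}, c₁^{(j)}, …, c_j^{(j)}. If ρ₁, …, ρ_p are linearly independent, then span{ρ₁, …, ρ_p} = span{C b, C² b, …, C^p b}. -/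
open scoped InnerProductSpace

/-- The partial least squares basis functions `ρ₁, …, ρ_p`, satisfying the recursion of
Lemma 1 in terms of the operator `C` and slope `b`, span the same space as the
Krylov functions `C b, C² b, …, C^p b` (provided they are linearly independent).
Here `ρ (j)` represents `ρ_{j+1}` (0-based indexing). -/
theorem stmt_1 {H : Type*} [NormedAddCommGroup H] [InnerProductSpace ℝ H]
    (C : H →ₗ[ℝ] H) (b : H) (p : ℕ) (hp : 0 < p) (ρ : ℕ → H)
    (hρ0 : ∃ c : ℝ, ρ 0 = c • C b)
    (hρrec : ∀ j : ℕ, j + 1 < p → ∃ (c0 : ℝ) (c : ℕ → ℝ),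
      ρ (j + 1) = c0 • (C (b - ∑ l ∈ Finset.range (j + 1), ⟪b, ρ l⟫_ℝ • ρ l)
        + ∑ l ∈ Finset.range (j + 1), c l • ρ l))
    (hli : LinearIndependent ℝ (fun i : Fin p => ρ i.val)) :
    Submodule.span ℝ (ρ '' Set.Iio p) =
      Submodule.span ℝ ((fun j : ℕ => (C ^ (j + 1)) b) '' Set.Iio p) := by
  classical
  set f : ℕ → H := fun j : ℕ => (C ^ (j + 1)) b with hf
  set K : ℕ → Submodule ℝ H := fun j => Submodule.span ℝ (f '' Set.Iio j) with hK
  have hKmono : ∀ {i j : ℕ}, i ≤ j → K i ≤ K j := by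
    intro i j hij
    exact Submodule.span_mono (Set.image_mono (Set.Iio_subset_Iio hij))
  have hmem : ∀ i j : ℕ, i < j → f i ∈ K j := by
    intro i j hij
    exact Submodule.subset_span ⟨i, hij, rfl⟩
  -- C maps K j into K (j+1)
  have hCmap : ∀ j : ℕ, ∀ x ∈ K j, C x ∈ K (j + 1) := by
    intro j x hx
    induction hx using Submodule.span_induction with
    | mem y hy =>
      obtain ⟨i, hi, rfl⟩ := hy
      have hi' : i < j := hi
      have : C (f i) = f (i + 1) := by
        show C ((C ^ (i + 1)) b) = (C ^ (i + 1 + 1)) b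
        rw [← Module.End.mul_apply, ← pow_succ']
      rw [this]
      exact hmem _ _ (Nat.succ_lt_succ hi')
    | zero => simpa using (K (j + 1)).zero_mem
    | add y z _ _ hy hz => rw [map_add]; exact (K (j + 1)).add_mem hy hz
    | smul a y _ hy => rw [map_smul]; exact (K (j + 1)).smul_mem a hy
  -- main inductive claim
  have hmain : ∀ j : ℕ, j < p → ρ j ∈ K (j + 1) := by
    intro j
    induction j using Nat.strong_induction_on with
    | _ j ih =>
      intro hjp
      match j with
      | 0 =>
        obtain ⟨c, hc⟩ := hρ0
        rw [hc]
        refine (K 1).smul_mem c ?_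
        have : C b = f 0 := by simp [hf]
        rw [this]; exact hmem 0 1 (by omega)
      | Nat.succ j =>
        obtain ⟨c0, c, hrec⟩ := hρrec j hjp
        have hρK : ∀ l, l < j + 1 → ρ l ∈ K (j + 1) := by
          intro l hl
          have h := ih l (by omega) (by omega)
          exact hKmono (by omega : l + 1 ≤ j + 1) h
        rw [hrec]
        refine (K (j + 2)).smul_mem c0 (Submodule.add_mem _ ?_ ?_)
        · rw [map_sub]
          refine Submodule.sub_mem _ ?_ ?_
          · have : C b = f 0 := by simp [hf]
            rw [this]; exact hmem 0 (j + 2) (by omega)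
          · refine hCmap (j + 1) _ (Submodule.sum_mem _ ?_)
            intro l hl
            exact (K (j + 1)).smul_mem _ (hρK l (Finset.mem_range.mp hl))
        · refine hKmono (by omega : j + 1 ≤ j + 2) (Submodule.sum_mem _ ?_)
          intro l hl
          exact (K (j + 1)).smul_mem _ (hρK l (Finset.mem_range.mp hl))
  -- inclusion of spans
  have hle : Submodule.span ℝ (ρ '' Set.Iio p) ≤ K p := by
    rw [Submodule.span_le]
    rintro x ⟨j, hj, rfl⟩
    have hj' : j < p := hj
    exact hKmono (by omega : j + 1 ≤ p) (hmain j hj')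
  -- finrank comparison
  have himg1 : ρ '' Set.Iio p = Set.range (fun i : Fin p => ρ i.val) := by
    ext x
    constructor
    · rintro ⟨j, hj, rfl⟩; exact ⟨⟨j, hj⟩, rfl⟩
    · rintro ⟨i, rfl⟩; exact ⟨i.val, i.isLt, rfl⟩
  have himg2 : f '' Set.Iio p = Set.range (fun i : Fin p => f i.val) := by
    ext x
    constructor
    · rintro ⟨j, hj, rfl⟩; exact ⟨⟨j, hj⟩, rfl⟩
    · rintro ⟨i, rfl⟩; exact ⟨i.val, i.isLt, rfl⟩
  have hfin : FiniteDimensional ℝ (K p) := by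
    rw [hK]
    exact FiniteDimensional.span_of_finite ℝ ((Set.finite_Iio p).image f)
  have h1 : Module.finrank ℝ (Submodule.span ℝ (ρ '' Set.Iio p)) = p := by
    rw [himg1, finrank_span_eq_card hli, Fintype.card_fin]
  have h2 : Module.finrank ℝ (K p) ≤ p := by
    show Module.finrank ℝ (Submodule.span ℝ (f '' Set.Iio p)) ≤ p
    rw [himg2]
    simpa [Set.finrank] using finrank_range_le_card (R := ℝ) (fun i : Fin p => f i.val)
  have := Submodule.eq_of_le_of_finrank_le hle (by omega)
  rw [this]
end

section
/- Consider the partially functional linear model: let (Ω, P) be a probability space, H a real separable Hilbert space, z : Ω → ℝ^q square-integrable with E[z] = 0 and Σ_z = E[z zᵀ] invertible, x : Ω → H Bochner square-integrable with E[x] = 0, and ε : Ω → ℝ square-integrable with E[ε z] = 0 ∈ ℝ^q and E[ε x] = 0 ∈ H. Fix α₀ ∈ ℝ, α ∈ ℝ^q, b ∈ H and set y = α₀ + ⟨z, α⟩ + ⟨x, b⟩ + ε. Let g_l = E[z_l x], M(z, x) = x − Σ_{k,l} z_k (Σ_z⁻¹)_{kl} g_l, and define the residual covariance operator C f = E[ ⟨M(z,x),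 f⟩ M(z,x) ]. Then, with m(z, y) = y − zᵀ Σ_z⁻¹ E[z y], one has E[ m(z, y) · M(z, x) ] = C(b) in H. -/
open MeasureTheory
open scoped InnerProductSpace ENNReal Matrix

lemma aux_int_smul {Ω : Type*} [MeasurableSpace Ω] {P : Measure Ω}
    {E : Type*} [NormedAddCommGroup E] [NormedSpace ℝ E]
    {φ : Ω → ℝ} {f : Ω → E} (hφ : MemLp φ 2 P) (hf : MemLp f 2 P) :
    Integrable (fun ω => φ ω • f ω) P := by
  have h : (1 : ℝ≥0∞) / 1 = 1 / 2 + 1 / 2 := by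
    simp only [one_div, inv_one]; exact ENNReal.inv_two_add_inv_two.symm
  exact memLp_one_iff_integrable.mp (hf.smul hφ (r := 1) (hpqr := ⟨by simpa [one_div] using h.symm⟩))

lemma aux_int_mul {Ω : Type*} [MeasurableSpace Ω] {P : Measure Ω}
    {φ f : Ω → ℝ} (hφ : MemLp φ 2 P) (hf : MemLp f 2 P) :
    Integrable (fun ω => φ ω * f ω) P := aux_int_smul hφ hf

/-- Identity (3.1) of the paper: in the partially functional linear model
`y = α₀ + ⟨z, α⟩ + ⟨x, b⟩ + ε`, one has `E[m(z, y) · M(z, x)] = C(b)`, where `C` is the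
residual covariance operator of the residualized functional covariate `M(z, x)`. -/
theorem stmt_8 {Ω : Type*} [MeasurableSpace Ω] (P : Measure Ω) [IsProbabilityMeasure P]
    {H : Type*} [NormedAddCommGroup H] [InnerProductSpace ℝ H] [CompleteSpace H]
    [TopologicalSpace.SeparableSpace H]
    {q : ℕ} (z : Ω → Fin q → ℝ) (x : Ω → H) (ε : Ω → ℝ)
    (hz : ∀ k, MemLp (fun ω => z ω k) 2 P)
    (hzmean : ∀ k, ∫ ω, z ω k ∂P = 0)
    (hx : MemLp x 2 P)
    (hxmean : (∫ ω, x ω ∂P) = 0)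
    (hε : MemLp ε 2 P)
    (hεz : ∀ k, ∫ ω, ε ω * z ω k ∂P = 0)
    (hεx : (∫ ω, ε ω • x ω ∂P) = 0)
    (Sz : Matrix (Fin q) (Fin q) ℝ)
    (hSz : Sz = Matrix.of fun k l => ∫ ω, z ω k * z ω l ∂P)
    (hinv : IsUnit Sz.det)
    (g : Fin q → H) (hg : ∀ l, g l = ∫ ω, z ω l • x ω ∂P)
    (α₀ : ℝ) (α : Fin q → ℝ) (b : H)
    (y : Ω → ℝ) (hy : ∀ ω, y ω = α₀ + (∑ k, z ω k * α k) + ⟪x ω, b⟫_ℝ + ε ω)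
    (M : Ω → H) (hM : ∀ ω, M ω = x ω - ∑ k, ∑ l, (z ω k * Sz⁻¹ k l) • g l)
    (C : H → H) (hC : ∀ f, C f = ∫ ω, ⟪M ω, f⟫_ℝ • M ω ∂P)
    (my : Ω → ℝ)
    (hmy : ∀ ω, my ω = y ω - ∑ k, ∑ l, z ω k * Sz⁻¹ k l * ∫ ω', z ω' l * y ω' ∂P) :
    ∫ ω, my ω • M ω ∂P = C b := by
  classical
  have hzint : ∀ k, Integrable (fun ω => z ω k) P := fun k => (hz k).integrable one_le_two
  -- M is in L²
  have hM2 : MemLp M 2 P := by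
    have hMeq : M = fun ω => x ω - ∑ k, ∑ l, z ω k • ((Sz⁻¹ k l) • g l) := by
      funext ω; rw [hM ω]
      congr 1
      exact Finset.sum_congr rfl fun k _ => Finset.sum_congr rfl fun l _ => mul_smul _ _ _
    rw [hMeq]
    exact hx.sub (memLp_finset_sum _ fun k _ => memLp_finset_sum _ fun l _ =>
      MemLp.smul (r := 2) (memLp_top_const _) (hz k))
  -- value of E[z_l y]
  have hYv : ∀ l, (∫ ω, z ω l * y ω ∂P) = (Sz *ᵥ α) l + ⟪g l, b⟫_ℝ := by
    intro l
    have hyexp : (fun ω => z ω l * y ω)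
        = fun ω => ((z ω l * α₀ + ∑ m, (z ω l * z ω m) * α m)
            + (z ω l * ⟪x ω, b⟫_ℝ + z ω l * ε ω)) := by
      funext ω; rw [hy ω]
      rw [mul_add, mul_add, mul_add, Finset.mul_sum, add_assoc]
      congr 2
      exact Finset.sum_congr rfl fun m _ => (mul_assoc _ _ _).symm
    have i1 : Integrable (fun ω => z ω l * α₀) P := (hzint l).mul_const α₀
    have i2 : Integrable (fun ω => ∑ m, (z ω l * z ω m) * α m) P :=
      integrable_finset_sum _ fun m _ => (aux_int_mul (hz l) (hz m)).mul_const _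
    have i3 : Integrable (fun ω => z ω l * ⟪x ω, b⟫_ℝ) P :=
      aux_int_mul (hz l) (hx.inner_const b)
    have i4 : Integrable (fun ω => z ω l * ε ω) P := aux_int_mul (hz l) hε
    have i12 : Integrable (fun ω => z ω l * α₀ + ∑ m, (z ω l * z ω m) * α m) P := i1.add i2
    have i34 : Integrable (fun ω => z ω l * ⟪x ω, b⟫_ℝ + z ω l * ε ω) P := i3.add i4
    rw [hyexp, integral_add i12 i34, integral_add i1 i2, integral_add i3 i4]
    have e1 : (∫ ω, z ω l * α₀ ∂P) = 0 := by
      rw [integral_mul_const, hzmean l, zero_mul]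
    have e2 : (∫ ω, ∑ m, (z ω l * z ω m) * α m ∂P) = (Sz *ᵥ α) l := by
      rw [integral_finset_sum _ fun m _ => (aux_int_mul (hz l) (hz m)).mul_const _]
      simp only [integral_mul_const]
      rw [Matrix.mulVec, dotProduct]
      exact Finset.sum_congr rfl fun m _ => by rw [hSz]; rfl
    have e3 : (∫ ω, z ω l * ⟪x ω, b⟫_ℝ ∂P) = ⟪g l, b⟫_ℝ := by
      have : (fun ω => z ω l * ⟪x ω, b⟫_ℝ) = fun ω => ⟪b, z ω l • x ω⟫_ℝ := by
        funext ω; rw [real_inner_smul_right, real_inner_comm]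
      rw [this, integral_inner (aux_int_smul (hz l) hx) b, ← hg l, real_inner_comm]
    have e4 : (∫ ω, z ω l * ε ω ∂P) = 0 := by
      have : (fun ω => z ω l * ε ω) = fun ω => ε ω * z ω l := by
        funext ω; rw [mul_comm]
      rw [this, hεz l]
    rw [e1, e2, e3, e4]; ring
  -- the key pointwise identity
  have hmy' : ∀ ω, my ω = (α₀ + ε ω) + ⟪M ω, b⟫_ℝ := by
    intro ω
    have hsum : ∀ k, (∑ l, Sz⁻¹ k l * (Sz *ᵥ α) l) = α k := by
      intro k
      have h1 : Sz⁻¹ *ᵥ (Sz *ᵥ α) = α := by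
        rw [Matrix.mulVec_mulVec, Matrix.nonsing_inv_mul _ hinv, Matrix.one_mulVec]
      calc (∑ l, Sz⁻¹ k l * (Sz *ᵥ α) l) = (Sz⁻¹ *ᵥ (Sz *ᵥ α)) k := rfl
        _ = α k := by rw [h1]
    have hexp : (∑ k, ∑ l, z ω k * Sz⁻¹ k l * ∫ ω', z ω' l * y ω' ∂P)
        = (∑ k, z ω k * α k) + ∑ k, ∑ l, z ω k * Sz⁻¹ k l * ⟪g l, b⟫_ℝ := by
      rw [← Finset.sum_add_distrib]
      refine Finset.sum_congr rfl fun k _ => ?_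
      have : (∑ l, z ω k * Sz⁻¹ k l * ∫ ω', z ω' l * y ω' ∂P)
          = ∑ l, (z ω k * (Sz⁻¹ k l * (Sz *ᵥ α) l) + z ω k * Sz⁻¹ k l * ⟪g l, b⟫_ℝ) := by
        refine Finset.sum_congr rfl fun l _ => ?_
        rw [hYv l]; ring
      rw [this, Finset.sum_add_distrib, ← Finset.mul_sum, hsum k]
    have hinner : ⟪M ω, b⟫_ℝ
        = ⟪x ω, b⟫_ℝ - ∑ k, ∑ l, z ω k * Sz⁻¹ k l * ⟪g l, b⟫_ℝ := by
      rw [hM ω, inner_sub_left, sum_inner]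
      congr 1
      refine Finset.sum_congr rfl fun k _ => ?_
      rw [sum_inner]
      exact Finset.sum_congr rfl fun l _ => real_inner_smul_left _ _ _
    rw [hmy ω, hy ω, hexp, hinner]; ring
  -- the centered terms integrate to zero
  set φ : Ω → ℝ := fun ω => α₀ + ε ω with hφ
  have hφ2 : MemLp φ 2 P := (memLp_const α₀).add hε
  have hφz : ∀ k, (∫ ω, φ ω * z ω k ∂P) = 0 := by
    intro k
    have : (fun ω => φ ω * z ω k) = fun ω => α₀ * z ω k + ε ω * z ω k := by
      funext ω; rw [hφ]; ring
    have j1 : Integrable (fun ω => α₀ * z ω k) P := (hzint k).const_mul α₀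
    rw [this, integral_add j1 (aux_int_mul hε (hz k)), integral_const_mul, hzmean k, hεz k]; ring
  have hφM : (∫ ω, φ ω • M ω ∂P) = 0 := by
    have hMeq : (fun ω => φ ω • M ω)
        = fun ω => φ ω • x ω - ∑ k, ∑ l, (φ ω * z ω k) • ((Sz⁻¹ k l) • g l) := by
      funext ω; rw [hM ω, smul_sub, Finset.smul_sum]
      congr 1
      refine Finset.sum_congr rfl fun k _ => ?_
      rw [Finset.smul_sum]
      refine Finset.sum_congr rfl fun l _ => ?_
      rw [smul_smul, smul_smul, mul_assoc]
    have hφx : (∫ ω, φ ω • x ω ∂P) = 0 := by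
      have : (fun ω => φ ω • x ω) = fun ω => α₀ • x ω + ε ω • x ω := by
        funext ω; rw [hφ, add_smul]
      have j1 : Integrable (fun ω => α₀ • x ω) P := (hx.integrable one_le_two).smul α₀
      rw [this, integral_add j1 (aux_int_smul hε hx), integral_smul, hxmean, hεx, smul_zero,
        add_zero]
    rw [hMeq, integral_sub (aux_int_smul hφ2 hx)
        (integrable_finset_sum _ fun k _ => integrable_finset_sum _ fun l _ =>
          (aux_int_mul hφ2 (hz k)).smul_const _),
      hφx, integral_finset_sum _ fun k _ => integrable_finset_sum _ fun l _ =>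
        (aux_int_mul hφ2 (hz k)).smul_const _]
    rw [Finset.sum_eq_zero fun k _ => ?_, sub_zero]
    rw [integral_finset_sum _ fun l _ => (aux_int_mul hφ2 (hz k)).smul_const _]
    refine Finset.sum_eq_zero fun l _ => ?_
    rw [integral_smul_const, hφz k, zero_smul]
  -- put everything together
  have hsplit : (fun ω => my ω • M ω) = fun ω => φ ω • M ω + ⟪M ω, b⟫_ℝ • M ω := by
    funext ω; rw [hmy' ω, add_smul]
  rw [hsplit, integral_add (aux_int_smul hφ2 hM2) (aux_int_smul (hM2.inner_const b) hM2),
    hφM, zero_add, hC]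
end
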